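/- Let m ≥ 2, p₁,…,p_m ∈ [2,∞] (with possibly p_j = ∞), r₁,…,r_m ∈ (0,∞), and let k ∈ {1,…,m} be such that r_j < 2 for j ≤ k and r_j ≥ 2 for j > k. Assume there is D ≥ 1 such that (Σ_{i₁,…,i_m=1}^n |T(e_{i₁},…,e_{i_m})|²)^{1/2} ≤ D n^{|1/p| − 1/2} ‖T‖ for all m-linear T : ℓ_{p₁}^n × ⋯ × ℓ_{p_m}^n → ℂ and all n, where |1/p| = Σ_j 1/p_j. Then (Σ_{i₁}(…(Σ_{i_m}|T(e_{i₁},…,e_{i_m})|^{r_m})^{r_{m-1}/r_m}…)^{r₁/r₂})^{1/r₁} ≤ D · n^{Σ_{j=1}^k 1/r_j + |1/p| − (k+1)/2} · ‖T‖ for all such T and n. -/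

import Mathlib

open scoped ENNReal

noncomputable def mixedSum {n : ℕ} : (m : ℕ) → (Fin m → ℝ) → ((Fin m → Fin n) → ℝ) → ℝ
  | 0, _, F => F finZeroElim
  | m + 1, r, F =>
      (∑ i : Fin n,
        (mixedSum m (fun j => r j.succ) (fun is => F (Fin.cons i is))) ^ r 0) ^ (1 / r 0)

section auxHelpers

open Finset

private lemma vhoelder {n : ℕ} (a : Fin n → ℝ) (ha : ∀ i, 0 ≤ a i) {t : ℝ}
    (ht0 : 0 < t) (ht2 : t ≤ 2) :
    (∑ i, a i ^ t) ^ (1 / t) ≤ (n : ℝ) ^ (1 / t - 1 / 2) * (∑ i, a i ^ (2:ℝ)) ^ ((1:ℝ)/2) := by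
  have hp : (1:ℝ) ≤ 2 / t := by rw [le_div_iff₀ ht0]; linarith
  have hs2 : (0:ℝ) ≤ ∑ i, a i ^ (2:ℝ) :=
    Finset.sum_nonneg fun i _ => Real.rpow_nonneg (ha i) 2
  have h := Real.inner_le_weight_mul_Lp_of_nonneg Finset.univ hp (fun _ => 1)
    (fun i => a i ^ t) (fun _ => zero_le_one) (fun i => Real.rpow_nonneg (ha i) t)
  simp only [one_mul, Finset.sum_const, Finset.card_univ, Fintype.card_fin, nsmul_eq_mul,
    mul_one] at h
  have hsimp : ∀ i, (a i ^ t) ^ (2/t) = a i ^ (2:ℝ) := by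
    intro i
    rw [← Real.rpow_mul (ha i)]
    congr 1
    field_simp
  simp only [hsimp] at h
  have h1 : (0:ℝ) ≤ ∑ i, a i ^ t := Finset.sum_nonneg fun i _ => Real.rpow_nonneg (ha i) t
  have key := Real.rpow_le_rpow h1 h (one_div_pos.mpr ht0).le
  refine key.trans (le_of_eq ?_)
  have hnn : (0:ℝ) ≤ (n:ℝ) ^ (1 - (2/t)⁻¹) := Real.rpow_nonneg (Nat.cast_nonneg n) _
  have hsn : (0:ℝ) ≤ (∑ i, a i ^ (2:ℝ)) ^ (2/t)⁻¹ := Real.rpow_nonneg hs2 _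
  rw [Real.mul_rpow hnn hsn, ← Real.rpow_mul (Nat.cast_nonneg n), ← Real.rpow_mul hs2]
  have e1 : (1 - (2/t)⁻¹) * (1/t) = 1/t - 1/2 := by
    rw [inv_div]; field_simp
  have e2 : (2/t)⁻¹ * (1/t) = 1/2 := by
    rw [inv_div]; field_simp
  rw [e1, e2]

private lemma vell2 {n : ℕ} (a : Fin n → ℝ) (ha : ∀ i, 0 ≤ a i) {t : ℝ} (ht : 2 ≤ t) :
    (∑ i, a i ^ t) ^ (1 / t) ≤ (∑ i, a i ^ (2:ℝ)) ^ ((1:ℝ)/2) := by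
  have ht0 : (0:ℝ) < t := by linarith
  have hs2 : (0:ℝ) ≤ ∑ i, a i ^ (2:ℝ) :=
    Finset.sum_nonneg fun i _ => Real.rpow_nonneg (ha i) 2
  set S : ℝ := (∑ i, a i ^ (2:ℝ)) ^ ((1:ℝ)/2) with hS
  have hS0 : 0 ≤ S := Real.rpow_nonneg hs2 _
  have hSsq : S ^ (2:ℝ) = ∑ i, a i ^ (2:ℝ) := by
    rw [hS, ← Real.rpow_mul hs2]; norm_num
  have hai : ∀ i, a i ≤ S := by
    intro i
    have h1 : a i ^ (2:ℝ) ≤ ∑ j, a j ^ (2:ℝ) :=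
      Finset.single_le_sum (fun j _ => Real.rpow_nonneg (ha j) 2) (Finset.mem_univ i)
    have := Real.rpow_le_rpow (Real.rpow_nonneg (ha i) 2) h1 (by norm_num : (0:ℝ) ≤ 1/2)
    rwa [← Real.rpow_mul (ha i), show (2:ℝ) * (1/2) = 1 by norm_num, Real.rpow_one] at this
  have hterm : ∀ i, a i ^ t ≤ a i ^ (2:ℝ) * S ^ (t - 2) := by
    intro i
    have : a i ^ t = a i ^ (2:ℝ) * a i ^ (t - 2) := by
      rw [← Real.rpow_add' (ha i)] <;> norm_num
      linarith
    rw [this]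
    exact mul_le_mul_of_nonneg_left
      (Real.rpow_le_rpow (ha i) (hai i) (by linarith)) (Real.rpow_nonneg (ha i) 2)
  have hsum : ∑ i, a i ^ t ≤ S ^ t := by
    calc ∑ i, a i ^ t ≤ ∑ i, a i ^ (2:ℝ) * S ^ (t - 2) :=
          Finset.sum_le_sum fun i _ => hterm i
      _ = (∑ i, a i ^ (2:ℝ)) * S ^ (t - 2) := by rw [← Finset.sum_mul]
      _ = S ^ (2:ℝ) * S ^ (t - 2) := by rw [hSsq]
      _ = S ^ t := by
          rw [← Real.rpow_add' hS0 (by intro h; linarith : (2:ℝ) + (t-2) ≠ 0)]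
          congr 1; ring
  have := Real.rpow_le_rpow (Finset.sum_nonneg fun i _ => Real.rpow_nonneg (ha i) t)
    hsum (one_div_pos.mpr ht0).le
  rwa [← Real.rpow_mul hS0, mul_one_div, div_self ht0.ne', Real.rpow_one] at this

private lemma vconst {n : ℕ} (a : Fin n → ℝ) (ha : ∀ i, 0 ≤ a i) {c t : ℝ}
    (hc : 0 ≤ c) (ht : 0 < t) :
    (∑ i, (c * a i) ^ t) ^ (1 / t) = c * (∑ i, a i ^ t) ^ (1 / t) := by
  have : ∀ i, (c * a i) ^ t = c ^ t * a i ^ t := fun i => Real.mul_rpow hc (ha i)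
  simp only [this, ← Finset.mul_sum]
  rw [Real.mul_rpow (Real.rpow_nonneg hc t)
    (Finset.sum_nonneg fun i _ => Real.rpow_nonneg (ha i) t),
    ← Real.rpow_mul hc, mul_one_div, div_self ht.ne', Real.rpow_one]

private lemma mixedSum_nonneg {n : ℕ} (m : ℕ) (r : Fin m → ℝ) (F : (Fin m → Fin n) → ℝ)
    (hF : ∀ i, 0 ≤ F i) : 0 ≤ mixedSum m r F := by
  induction m with
  | zero => exact hF _
  | succ m ih =>
      simp only [mixedSum]
      exact Real.rpow_nonneg (Finset.sum_nonneg fun i _ =>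
        Real.rpow_nonneg (ih _ _ fun is => hF _) _) _

private lemma sum_cons_eq {n m : ℕ} (G : (Fin (m+1) → Fin n) → ℝ) :
    ∑ i : Fin n, ∑ is : Fin m → Fin n, G (Fin.cons i is) = ∑ f, G f := by
  rw [← (Fin.consEquiv (fun _ => Fin n)).sum_comp G, Fintype.sum_prod_type]
  rfl

private lemma mixedSum_le_l2 {n : ℕ} (m : ℕ) (r : Fin m → ℝ) (F : (Fin m → Fin n) → ℝ)
    (hr : ∀ j, 0 < r j) (hF : ∀ i, 0 ≤ F i) :
    mixedSum m r F ≤ (∏ j, if r j < 2 then (n:ℝ) ^ (1 / r j - 1/2) else 1) *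
      (∑ i, F i ^ (2:ℝ)) ^ ((1:ℝ)/2) := by
  induction m with
  | zero =>
      simp only [mixedSum, Finset.univ_eq_empty, Finset.prod_empty, one_mul]
      have h1 : (∑ i : Fin 0 → Fin n, F i ^ (2:ℝ)) = F finZeroElim ^ (2:ℝ) := by
        rw [Fintype.sum_unique]
        congr 1
      rw [h1, ← Real.rpow_mul (hF _)]
      norm_num
  | succ m ih =>
      set c0 : ℝ := if r 0 < 2 then (n:ℝ) ^ (1 / r 0 - 1/2) else 1 with hc0
      set C : ℝ := ∏ j : Fin m, (if r j.succ < 2 then (n:ℝ) ^ (1 / r j.succ - 1/2) else 1)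
        with hC
      have hC0 : 0 ≤ C := Finset.prod_nonneg fun j _ => by
        split <;> [exact Real.rpow_nonneg (Nat.cast_nonneg n) _; exact zero_le_one]
      set Q : Fin n → ℝ := fun i => (∑ is : Fin m → Fin n,
        F (Fin.cons i is) ^ (2:ℝ)) ^ ((1:ℝ)/2) with hQ
      have hQ0 : ∀ i, 0 ≤ Q i := fun i => Real.rpow_nonneg
        (Finset.sum_nonneg fun is _ => Real.rpow_nonneg (hF _) _) _
      have hS0 : ∀ i, 0 ≤ mixedSum m (fun j => r j.succ) (fun is => F (Fin.cons i is)) :=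
        fun i => mixedSum_nonneg m _ _ fun is => hF _
      have hSQ : ∀ i, mixedSum m (fun j => r j.succ) (fun is => F (Fin.cons i is)) ≤ C * Q i :=
        fun i => ih (fun j => r j.succ) (fun is => F (Fin.cons i is)) (fun j => hr j.succ)
          (fun is => hF _)
      have hQsq : ∀ i, Q i ^ (2:ℝ) = ∑ is : Fin m → Fin n, F (Fin.cons i is) ^ (2:ℝ) := by
        intro i
        rw [hQ, ← Real.rpow_mul (Finset.sum_nonneg fun is _ => Real.rpow_nonneg (hF _) _)]
        norm_num
      have step1 : mixedSum (m+1) r F ≤ (∑ i, (C * Q i) ^ r 0) ^ (1 / r 0) := by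
        simp only [mixedSum]
        refine Real.rpow_le_rpow (Finset.sum_nonneg fun i _ => Real.rpow_nonneg (hS0 i) _)
          (Finset.sum_le_sum fun i _ => Real.rpow_le_rpow (hS0 i) (hSQ i) (hr 0).le) ?_
        exact (one_div_pos.mpr (hr 0)).le
      have step2 : (∑ i, (C * Q i) ^ r 0) ^ (1 / r 0) = C * (∑ i, Q i ^ r 0) ^ (1 / r 0) :=
        vconst Q hQ0 hC0 (hr 0)
      have step3 : (∑ i, Q i ^ r 0) ^ (1 / r 0) ≤ c0 * (∑ i, Q i ^ (2:ℝ)) ^ ((1:ℝ)/2) := by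
        by_cases h : r 0 < 2
        · rw [hc0, if_pos h]
          exact vhoelder Q hQ0 (hr 0) h.le
        · rw [hc0, if_neg h, one_mul]
          exact vell2 Q hQ0 (not_lt.mp h)
      have step4 : (∑ i, Q i ^ (2:ℝ)) = ∑ f : Fin (m+1) → Fin n, F f ^ (2:ℝ) := by
        simp only [hQsq]
        exact sum_cons_eq (fun f => F f ^ (2:ℝ))
      have hprod : (∏ j : Fin (m+1), (if r j < 2 then (n:ℝ) ^ (1 / r j - 1/2) else 1))
          = c0 * C := by rw [Fin.prod_univ_succ]
      calc mixedSum (m+1) r F ≤ C * (∑ i, Q i ^ r 0) ^ (1 / r 0) := step2 ▸ step1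
        _ ≤ C * (c0 * (∑ i, Q i ^ (2:ℝ)) ^ ((1:ℝ)/2)) :=
            mul_le_mul_of_nonneg_left step3 hC0
        _ = (c0 * C) * (∑ f : Fin (m+1) → Fin n, F f ^ (2:ℝ)) ^ ((1:ℝ)/2) := by
            rw [step4]; ring
        _ = _ := by rw [hprod]

private lemma card_filter_lt_fin {m k : ℕ} (hkm : k ≤ m) :
    (Finset.univ.filter (fun j : Fin m => (j : ℕ) < k)).card = k := by
  have : (Finset.univ.filter (fun j : Fin m => (j : ℕ) < k))
      = Finset.univ.map (Fin.castLEEmb hkm) := by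
    ext j
    constructor
    · intro hj
      rw [Finset.mem_filter] at hj
      exact Finset.mem_map.mpr ⟨⟨(j : ℕ), hj.2⟩, Finset.mem_univ _, Fin.ext rfl⟩
    · intro hj
      rw [Finset.mem_map] at hj
      obtain ⟨i, -, rfl⟩ := hj
      refine Finset.mem_filter.mpr ⟨Finset.mem_univ _, ?_⟩
      simpa using i.isLt
  rw [this, Finset.card_map, Finset.card_univ, Fintype.card_fin]

end auxHelpers

/-- The case `p ∈ [2,∞]^m`, `M_<^2 = {1,…,k}`: from the `ℓ_2` estimate
`(∑|T(e_i)|²)^{1/2} ≤ D n^{|1/p|-1/2}‖T‖` one deduces the mixed-sum inequality with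
`n^{∑_{j≤k} 1/r_j + |1/p| - (k+1)/2}`. -/
theorem stmt15 (m k : ℕ) (hm : 2 ≤ m) (hk1 : 1 ≤ k) (hkm : k ≤ m)
    (p : Fin m → ℝ≥0∞) [∀ j, Fact (1 ≤ p j)] (hp2 : ∀ j, 2 ≤ p j)
    (r : Fin m → ℝ) (hr : ∀ j, 0 < r j)
    (hrlt : ∀ j : Fin m, (j : ℕ) < k → r j < 2)
    (hrge : ∀ j : Fin m, k ≤ (j : ℕ) → 2 ≤ r j)
    (D : ℝ) (hD : 1 ≤ D)
    (h2 : ∀ (n : ℕ)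
      (T : ContinuousMultilinearMap ℂ (fun j : Fin m => PiLp (p j) (fun _ : Fin n => ℂ)) ℂ),
      (∑ i : Fin m → Fin n, ‖T (fun j => WithLp.toLp (p j) (Pi.single (i j) 1))‖ ^ (2 : ℝ)) ^ ((1 : ℝ) / 2) ≤
        D * (n : ℝ) ^ ((∑ j, (p j)⁻¹).toReal - 1 / 2) * ‖T‖)
    (n : ℕ)
    (T : ContinuousMultilinearMap ℂ (fun j : Fin m => PiLp (p j) (fun _ : Fin n => ℂ)) ℂ) :
    mixedSum m r (fun i => ‖T (fun j => WithLp.toLp (p j) (Pi.single (i j) 1))‖) ≤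
      D * (n : ℝ) ^ ((∑ j ∈ Finset.univ.filter (fun j : Fin m => (j : ℕ) < k), 1 / r j) +
        (∑ j, (p j)⁻¹).toReal - ((k : ℝ) + 1) / 2) * ‖T‖ := by
  have hD0 : (0:ℝ) ≤ D := by linarith
  have hT0 : (0:ℝ) ≤ ‖T‖ := norm_nonneg T
  rcases Nat.eq_zero_or_pos n with hn | hn
  · -- n = 0 : LHS = 0
    subst hn
    obtain ⟨m', rfl⟩ : ∃ m', m = m' + 1 := ⟨m - 1, by omega⟩
    have hzero : mixedSum (m' + 1) r (fun i : Fin (m'+1) → Fin 0 =>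
        ‖T (fun j => WithLp.toLp (p j) (Pi.single (i j) 1))‖) = 0 := by
      simp only [mixedSum, Finset.univ_eq_empty, Finset.sum_empty]
      exact Real.zero_rpow (one_div_ne_zero (hr 0).ne')
    rw [hzero]
    have : (0:ℝ) ≤ ((0:ℕ):ℝ) ^ ((∑ j ∈ Finset.univ.filter
        (fun j : Fin (m'+1) => (j : ℕ) < k), 1 / r j) +
        (∑ j, (p j)⁻¹).toReal - ((k : ℝ) + 1) / 2) :=
      Real.rpow_nonneg (by norm_num) _
    positivity
  · -- n ≥ 1
    have hn0 : (0:ℝ) < (n:ℝ) := by exact_mod_cast hn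
    set F : (Fin m → Fin n) → ℝ := fun i => ‖T (fun j => WithLp.toLp (p j) (Pi.single (i j) 1))‖ with hF
    have hFnn : ∀ i, 0 ≤ F i := fun i => norm_nonneg _
    have hmain := mixedSum_le_l2 m r F hr hFnn
    -- rewrite the product of conditional factors as a single power of n
    have hfilter : Finset.univ.filter (fun j : Fin m => r j < 2)
        = Finset.univ.filter (fun j : Fin m => (j : ℕ) < k) := by
      apply Finset.filter_congr
      intro j _
      constructor
      · intro hj
        by_contra hjk
        exact absurd (hrge j (le_of_not_gt hjk)) (not_le.mpr hj)
      · exact hrlt j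
    have hprod : (∏ j, if r j < 2 then (n:ℝ) ^ (1 / r j - 1/2) else 1)
        = (n:ℝ) ^ ((∑ j ∈ Finset.univ.filter (fun j : Fin m => (j : ℕ) < k), 1 / r j)
            - (k:ℝ) / 2) := by
      rw [← Finset.prod_filter, hfilter, ← Real.rpow_sum_of_pos hn0]
      congr 1
      rw [Finset.sum_sub_distrib, Finset.sum_const, card_filter_lt_fin hkm]
      simp only [nsmul_eq_mul]
      ring
    rw [hprod] at hmain
    have hnpow : (0:ℝ) ≤ (n:ℝ) ^ ((∑ j ∈ Finset.univ.filter
        (fun j : Fin m => (j : ℕ) < k), 1 / r j) - (k:ℝ) / 2) :=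
      Real.rpow_nonneg hn0.le _
    calc mixedSum m r F
        ≤ (n:ℝ) ^ ((∑ j ∈ Finset.univ.filter (fun j : Fin m => (j : ℕ) < k), 1 / r j)
            - (k:ℝ) / 2) * (∑ i, F i ^ (2:ℝ)) ^ ((1:ℝ)/2) := hmain
      _ ≤ (n:ℝ) ^ ((∑ j ∈ Finset.univ.filter (fun j : Fin m => (j : ℕ) < k), 1 / r j)
            - (k:ℝ) / 2) * (D * (n : ℝ) ^ ((∑ j, (p j)⁻¹).toReal - 1 / 2) * ‖T‖) :=
          mul_le_mul_of_nonneg_left (h2 n T) hnpow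
      _ = D * (n : ℝ) ^ ((∑ j ∈ Finset.univ.filter (fun j : Fin m => (j : ℕ) < k), 1 / r j) +
            (∑ j, (p j)⁻¹).toReal - ((k : ℝ) + 1) / 2) * ‖T‖ := by
          rw [show (∑ j ∈ Finset.univ.filter (fun j : Fin m => (j : ℕ) < k), 1 / r j) +
            (∑ j, (p j)⁻¹).toReal - ((k : ℝ) + 1) / 2 =
            ((∑ j ∈ Finset.univ.filter (fun j : Fin m => (j : ℕ) < k), 1 / r j) - (k:ℝ)/2)
              + ((∑ j, (p j)⁻¹).toReal - 1/2) by ring, Real.rpow_add hn0]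
          ring
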